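/- Let W be a separable Banach space of type 2 and (Y_k) ⊆ L²(Ω; W) i.i.d. and centered, with partial sums S_n = Σ_{k=1}^{n} Y_k. Then for every ε > 0 and ε′ > 0 there exists δ ∈ (0,1) such that for all n, P( max_{⌈n(1−δ)⌉ ≤ m ≤ ⌊n(1+δ)⌋} ‖S_m − S_n‖_W > ε√n ) ≤ ε′. -/

import Mathlib

open MeasureTheory ProbabilityTheory Filter

set_option linter.unusedSectionVars false
set_option maxHeartbeats 1000000


section Aux
variable {Ω : Type*} [MeasurableSpace Ω] {P : Measure Ω}
variable {W : Type*} [NormedAddCommGroup W] [NormedSpace ℝ W] [MeasurableSpace W] [BorelSpace W]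

lemma iIndepFun_precomp_of_injective {ι κ : Type*} {Z : ι → Ω → W}
    (hindep : iIndepFun Z P) (g : κ → ι)
    (hg : Function.Injective g) :
    iIndepFun (fun j => Z (g j)) P := by
  classical
  rw [iIndepFun_iff_measure_inter_preimage_eq_mul] at hindep ⊢
  intro S sets hmeas
  set sets' : ι → Set W := fun i => ⋂ j ∈ S.filter (fun j => g j = i), sets j with hsets'
  have key : ∀ j ∈ S, sets' (g j) = sets j := by
    intro j hj
    have hfil : S.filter (fun j' => g j' = g j) = {j} := by
      ext j'
      simp only [Finset.mem_filter, Finset.mem_singleton]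
      constructor
      · rintro ⟨_, h⟩; exact hg h
      · rintro rfl; exact ⟨hj, rfl⟩
    simp only [hsets']
    rw [hfil]
    simp
  have hmeas' : ∀ i, i ∈ S.image g → MeasurableSet (sets' i) := by
    intro i hi
    refine Set.Finite.measurableSet_biInter (Finset.finite_toSet _) ?_
    intro j hj
    exact hmeas j (Finset.mem_filter.mp hj).1
  have h := hindep (S.image g) hmeas'
  have hInter : (⋂ i ∈ S.image g, Z i ⁻¹' sets' i) = ⋂ j ∈ S, (fun j => Z (g j)) j ⁻¹' sets j := by
    rw [Finset.set_biInter_finset_image]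
    exact Set.iInter₂_congr fun j hj => by rw [key j hj]
  have hProd : (∏ i ∈ S.image g, P (Z i ⁻¹' sets' i))
      = ∏ j ∈ S, P ((fun j => Z (g j)) j ⁻¹' sets j) := by
    rw [Finset.prod_image (fun j _ j' _ h => hg h)]
    exact Finset.prod_congr rfl fun j hj => by rw [key j hj]
  rw [← hInter, ← hProd]; exact h

lemma cheb_aux [IsProbabilityMeasure P] (X : Ω → W) (hX : MemLp X 2 P) {M s : ℝ}
    (hM : ∫ ω, ‖X ω‖ ^ 2 ∂P ≤ M) (hs : 0 < s) :
    P {ω | s ≤ ‖X ω‖} ≤ ENNReal.ofReal (M / s ^ 2) := by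
  have hint : Integrable (fun ω => ‖X ω‖ ^ 2) P := hX.norm.integrable_sq
  have key := mul_meas_ge_le_integral_of_nonneg
    (Filter.Eventually.of_forall fun ω => sq_nonneg ‖X ω‖) hint (s ^ 2)
  have hsub : {ω | s ≤ ‖X ω‖} ⊆ {ω | s ^ 2 ≤ ‖X ω‖ ^ 2} :=
    fun ω h => pow_le_pow_left₀ hs.le h 2
  have h2 : (P {ω | s ^ 2 ≤ ‖X ω‖ ^ 2}).toReal ≤ M / s ^ 2 := by
    rw [le_div_iff₀ (by positivity)]
    calc (P {ω | s ^ 2 ≤ ‖X ω‖ ^ 2}).toReal * s ^ 2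
        = s ^ 2 * (P {ω | s ^ 2 ≤ ‖X ω‖ ^ 2}).toReal := mul_comm _ _
      _ ≤ ∫ ω, ‖X ω‖ ^ 2 ∂P := key
      _ ≤ M := hM
  calc P {ω | s ≤ ‖X ω‖} ≤ P {ω | s ^ 2 ≤ ‖X ω‖ ^ 2} := measure_mono hsub
    _ = ENNReal.ofReal (P {ω | s ^ 2 ≤ ‖X ω‖ ^ 2}).toReal :=
        (ENNReal.ofReal_toReal (measure_ne_top _ _)).symm
    _ ≤ ENNReal.ofReal (M / s ^ 2) := ENNReal.ofReal_le_ofReal h2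

end Aux

section Aux2
set_option linter.unusedSectionVars false
variable {Ω : Type*} [MeasurableSpace Ω] {P : Measure Ω}
variable {W : Type*} [NormedAddCommGroup W] [NormedSpace ℝ W] [MeasurableSpace W] [BorelSpace W]
  [SecondCountableTopology W] [CompleteSpace W]

lemma block_bound [IsProbabilityMeasure P] {C σ2 : ℝ} (hC : 0 ≤ C) (hσ2 : 0 ≤ σ2)
    (hT2 : ∀ (n : ℕ) (X : Fin n → Ω → W),
      (∀ i, MemLp (X i) 2 P) → (∀ i, ∫ ω, X i ω ∂P = 0) →
      iIndepFun X P →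
      ∫ ω, ‖∑ i, X i ω‖ ^ 2 ∂P ≤ C * ∑ i, ∫ ω, ‖X i ω‖ ^ 2 ∂P)
    (Z : ℕ → Ω → W)
    (hindep : iIndepFun Z P)
    (hL2 : ∀ k, MemLp (Z k) 2 P)
    (hcent : ∀ k, ∫ ω, Z k ω ∂P = 0)
    (hmom : ∀ k, ∫ ω, ‖Z k ω‖ ^ 2 ∂P = σ2)
    (a N : ℕ) :
    ∫ ω, ‖∑ i ∈ Finset.Ico a (a + N), Z i ω‖ ^ 2 ∂P ≤ C * N * σ2 := by
  have hg : Function.Injective (fun i : Fin N => a + (i : ℕ)) := by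
    intro i j h
    simp only at h
    exact Fin.ext (Nat.add_left_cancel h)
  have hXi : iIndepFun (fun i : Fin N => Z (a + (i : ℕ))) P :=
    iIndepFun_precomp_of_injective hindep _ hg
  have hsum : ∀ ω : Ω, (∑ i : Fin N, Z (a + (i : ℕ)) ω) = ∑ i ∈ Finset.Ico a (a + N), Z i ω := by
    intro ω
    rw [Finset.sum_Ico_eq_sum_range]
    simp only [Nat.add_sub_cancel_left]
    exact Fin.sum_univ_eq_sum_range (fun i => Z (a + i) ω) N
  have h := hT2 N (fun i => Z (a + (i : ℕ))) (fun i => hL2 _) (fun i => hcent _) hXi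
  have hconst : (∑ i : Fin N, ∫ ω, ‖Z (a + (i : ℕ)) ω‖ ^ 2 ∂P) = (N : ℝ) * σ2 := by
    simp [hmom]
  calc ∫ ω, ‖∑ i ∈ Finset.Ico a (a + N), Z i ω‖ ^ 2 ∂P
      = ∫ ω, ‖∑ i : Fin N, Z (a + (i : ℕ)) ω‖ ^ 2 ∂P := by
        congr 1; funext ω; rw [hsum ω]
    _ ≤ C * ∑ i : Fin N, ∫ ω, ‖Z (a + (i : ℕ)) ω‖ ^ 2 ∂P := h
    _ = C * ((N : ℝ) * σ2) := by rw [hconst]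
    _ = C * N * σ2 := by ring

lemma maximal_aux [IsProbabilityMeasure P] {C σ2 : ℝ} (hC : 0 ≤ C) (hσ2 : 0 ≤ σ2)
    (Z : ℕ → Ω → W) (hmeas : ∀ k, Measurable (Z k))
    (hindep : iIndepFun Z P)
    (hL2 : ∀ k, MemLp (Z k) 2 P)
    (hblock : ∀ a N : ℕ, ∫ ω, ‖∑ i ∈ Finset.Ico a (a + N), Z i ω‖ ^ 2 ∂P ≤ C * N * σ2)
    {t : ℝ} (ht : 0 < t) (N : ℕ) :
    P {ω | ∃ j, j ≤ N ∧ 3 * t < ‖∑ i ∈ Finset.range j, Z i ω‖}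
      ≤ ENNReal.ofReal (2 * C * N * σ2 / t ^ 2) := by
  classical
  set T : ℕ → Ω → W := fun j ω => ∑ i ∈ Finset.range j, Z i ω with hT
  have hTmeas : ∀ j, Measurable (T j) := fun j => Finset.measurable_sum _ fun i _ => hmeas i
  have hTL2 : ∀ j, MemLp (T j) 2 P := fun j => memLp_finset_sum _ fun i _ => hL2 i
  have hUL2 : ∀ k, MemLp (fun ω => ∑ i ∈ Finset.Ico k N, Z i ω) 2 P :=
    fun k => memLp_finset_sum _ fun i _ => hL2 i
  set A : ℕ → Set Ω := fun k => {ω | 3 * t < ‖T k ω‖ ∧ ∀ j < k, ‖T j ω‖ ≤ 3 * t} with hA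
  set D : ℕ → Set Ω := fun k => {ω | 2 * t ≤ ‖∑ i ∈ Finset.Ico k N, Z i ω‖} with hD
  -- inclusion
  have hsub : {ω | ∃ j, j ≤ N ∧ 3 * t < ‖T j ω‖}
      ⊆ {ω | t ≤ ‖T N ω‖} ∪ ⋃ k ∈ Finset.range (N + 1), A k ∩ D k := by
    rintro ω ⟨j, hjN, hj⟩
    have hex : ∃ j, 3 * t < ‖T j ω‖ := ⟨j, hj⟩
    have hkspec : 3 * t < ‖T (Nat.find hex) ω‖ := Nat.find_spec hex
    set k := Nat.find hex with hk
    have hkmin : ∀ j' < k, ‖T j' ω‖ ≤ 3 * t := fun j' hj' => not_lt.mp (Nat.find_min hex hj')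
    have hkN : k ≤ N := le_trans (Nat.find_min' hex hj) hjN
    by_cases hTN : t ≤ ‖T N ω‖
    · exact Or.inl hTN
    · refine Or.inr (Set.mem_biUnion (Finset.mem_range.mpr (Nat.lt_succ_of_le hkN)) ?_)
      refine ⟨⟨hkspec, hkmin⟩, ?_⟩
      have hsum : ∑ i ∈ Finset.Ico k N, Z i ω = T N ω - T k ω :=
        eq_sub_of_add_eq' (Finset.sum_range_add_sum_Ico (fun i => Z i ω) hkN)
      have h1 : ‖T k ω‖ - ‖T N ω‖ ≤ ‖T N ω - T k ω‖ := by
        rw [norm_sub_rev]; exact norm_sub_norm_le _ _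
      push_neg at hTN
      show 2 * t ≤ ‖∑ i ∈ Finset.Ico k N, Z i ω‖
      rw [hsum]
      linarith
  -- measurability and disjointness of A
  have hAmeas : ∀ k, MeasurableSet (A k) := by
    intro k
    have : A k = {ω | 3 * t < ‖T k ω‖} ∩ ⋂ j, ⋂ (_ : j < k), {ω | ‖T j ω‖ ≤ 3 * t} := by
      ext ω; simp [hA]
    rw [this]
    exact (measurableSet_lt measurable_const (hTmeas k).norm).inter
      (MeasurableSet.iInter fun j => MeasurableSet.iInter fun _ =>
        measurableSet_le (hTmeas j).norm measurable_const)
  have hAdisj : (↑(Finset.range (N + 1)) : Set ℕ).Pairwise (Function.onFun Disjoint A) := by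
    intro k _ k' _ hkk'
    refine Set.disjoint_left.mpr fun ω hk hk' => ?_
    rcases lt_or_gt_of_ne hkk' with h | h
    · exact absurd hk.1 (not_lt.mpr (hk'.2 k h))
    · exact absurd hk'.1 (not_lt.mpr (hk.2 k' h))
  have hsumA : ∑ k ∈ Finset.range (N + 1), P (A k) ≤ 1 := by
    rw [← measure_biUnion_finset hAdisj fun k _ => hAmeas k]
    exact prob_le_one
  -- independence
  have hindepAD : ∀ k, k ≤ N → P (A k ∩ D k) = P (A k) * P (D k) := by
    intro k hkN
    set s1 : Finset ℕ := Finset.range k with hs1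
    set s2 : Finset ℕ := Finset.Ico k N with hs2
    have hdisj : Disjoint s1 s2 := by
      simp only [hs1, hs2, Finset.disjoint_left, Finset.mem_range, Finset.mem_Ico]
      omega
    have hVU := hindep.indepFun_finset s1 s2 hdisj hmeas
    set ψ : ℕ → ((i : s1) → W) → W := fun j v => ∑ i : s1, if (i : ℕ) < j then v i else 0 with hψ
    have hψmeas : ∀ j, Measurable (ψ j) := by
      intro j
      apply Finset.measurable_sum
      intro i _
      by_cases h : (i : ℕ) < j
      · simp only [if_pos h]; exact measurable_pi_apply i
      · simp only [if_neg h]; exact measurable_const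
    have hkey : ∀ (ω : Ω), ∀ j ≤ k, ψ j (fun i : s1 => Z i ω) = T j ω := by
      intro ω j hj
      have e1 : ψ j (fun i : s1 => Z i ω)
          = ∑ i ∈ s1, (if i < j then Z i ω else 0) :=
        Finset.sum_coe_sort s1 (fun i => if i < j then Z i ω else 0)
      rw [e1, ← Finset.sum_filter]
      congr 1
      ext i
      simp only [hs1, Finset.mem_filter, Finset.mem_range]
      omega
    set BS : Set ((i : s1) → W) := {v | 3 * t < ‖ψ k v‖ ∧ ∀ j < k, ‖ψ j v‖ ≤ 3 * t} with hBS'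
    set CS : Set ((i : s2) → W) := {v | 2 * t ≤ ‖∑ i : s2, v i‖} with hCS'
    have hBS : MeasurableSet BS := by
      have h1 : MeasurableSet {v : (i : s1) → W | 3 * t < ‖ψ k v‖} :=
        measurableSet_lt measurable_const (hψmeas k).norm
      have h2 : MeasurableSet {v : (i : s1) → W | ∀ j < k, ‖ψ j v‖ ≤ 3 * t} := by
        have e : {v : (i : s1) → W | ∀ j < k, ‖ψ j v‖ ≤ 3 * t}
            = ⋂ j, ⋂ (_ : j < k), {v | ‖ψ j v‖ ≤ 3 * t} := by ext v; simp
        rw [e]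
        exact MeasurableSet.iInter fun j => MeasurableSet.iInter fun _ =>
          measurableSet_le (hψmeas j).norm measurable_const
      exact h1.inter h2
    have hCS : MeasurableSet CS :=
      measurableSet_le measurable_const
        ((Finset.measurable_sum Finset.univ fun i _ => measurable_pi_apply i).norm)
    have hAV : A k = (fun ω (i : s1) => Z i ω) ⁻¹' BS := by
      ext ω
      simp only [hA, Set.mem_setOf_eq, Set.mem_preimage, hBS', Set.mem_setOf_eq]
      constructor
      · rintro ⟨h1, h2⟩
        exact ⟨by rw [hkey ω k le_rfl]; exact h1,
          fun j hj => by rw [hkey ω j hj.le]; exact h2 j hj⟩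
      · rintro ⟨h1, h2⟩
        rw [hkey ω k le_rfl] at h1
        refine ⟨h1, fun j hj => ?_⟩
        have := h2 j hj
        rwa [hkey ω j hj.le] at this
    have hDU : D k = (fun ω (i : s2) => Z i ω) ⁻¹' CS := by
      ext ω
      simp only [hD, Set.mem_setOf_eq, Set.mem_preimage, hCS', Set.mem_setOf_eq]
      rw [Finset.sum_coe_sort s2 (fun i => Z i ω)]
    rw [hAV, hDU]
    exact indepFun_iff_measure_inter_preimage_eq_mul.mp hVU BS CS hBS hCS
  -- Chebyshev bounds
  have hTNbound : P {ω | t ≤ ‖T N ω‖} ≤ ENNReal.ofReal (C * N * σ2 / t ^ 2) := by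
    refine cheb_aux (T N) (hTL2 N) ?_ ht
    have := hblock 0 N
    simpa using this
  have hDbound : ∀ k, k ≤ N → P (D k) ≤ ENNReal.ofReal (C * N * σ2 / (2 * t) ^ 2) := by
    intro k hkN
    refine cheb_aux _ (hUL2 k) ?_ (by positivity)
    have h := hblock k (N - k)
    rw [Nat.add_sub_cancel' hkN] at h
    refine h.trans ?_
    have hle : ((N - k : ℕ) : ℝ) ≤ (N : ℝ) := Nat.cast_le.mpr (Nat.sub_le N k)
    exact mul_le_mul_of_nonneg_right (mul_le_mul_of_nonneg_left hle hC) hσ2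
  -- assemble
  calc P {ω | ∃ j, j ≤ N ∧ 3 * t < ‖T j ω‖}
      ≤ P ({ω | t ≤ ‖T N ω‖} ∪ ⋃ k ∈ Finset.range (N + 1), A k ∩ D k) := measure_mono hsub
    _ ≤ P {ω | t ≤ ‖T N ω‖} + P (⋃ k ∈ Finset.range (N + 1), A k ∩ D k) := measure_union_le _ _
    _ ≤ P {ω | t ≤ ‖T N ω‖} + ∑ k ∈ Finset.range (N + 1), P (A k ∩ D k) := by
        exact add_le_add_right (measure_biUnion_finset_le _ _) _
    _ ≤ ENNReal.ofReal (C * N * σ2 / t ^ 2)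
        + ∑ k ∈ Finset.range (N + 1), P (A k) * ENNReal.ofReal (C * N * σ2 / (2 * t) ^ 2) := by
        refine add_le_add hTNbound (Finset.sum_le_sum fun k hk => ?_)
        rw [hindepAD k (Nat.lt_succ_iff.mp (Finset.mem_range.mp hk))]
        exact mul_le_mul_right (hDbound k (Nat.lt_succ_iff.mp (Finset.mem_range.mp hk))) _
    _ = ENNReal.ofReal (C * N * σ2 / t ^ 2)
        + (∑ k ∈ Finset.range (N + 1), P (A k)) * ENNReal.ofReal (C * N * σ2 / (2 * t) ^ 2) := by
        rw [Finset.sum_mul]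
    _ ≤ ENNReal.ofReal (C * N * σ2 / t ^ 2)
        + 1 * ENNReal.ofReal (C * N * σ2 / (2 * t) ^ 2) :=
        add_le_add_right (mul_le_mul_left hsumA _) _
    _ = ENNReal.ofReal (C * N * σ2 / t ^ 2) + ENNReal.ofReal (C * N * σ2 / (2 * t) ^ 2) := by
        rw [one_mul]
    _ ≤ ENNReal.ofReal (2 * C * N * σ2 / t ^ 2) := by
        rw [← ENNReal.ofReal_add (by positivity) (by positivity)]
        refine ENNReal.ofReal_le_ofReal ?_
        have h4 : (2 * t) ^ 2 = 4 * t ^ 2 := by ring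
        rw [h4]
        have hnn : (0:ℝ) ≤ C * N * σ2 := by positivity
        have hd : C * N * σ2 / (4 * t ^ 2) ≤ C * N * σ2 / t ^ 2 :=
          div_le_div_of_nonneg_left hnn (by positivity) (by nlinarith)
        have : C * N * σ2 / t ^ 2 + C * N * σ2 / t ^ 2 = 2 * C * N * σ2 / t ^ 2 := by ring
        linarith



end Aux2

theorem fluctuation_estimate_type2
    {Ω : Type*} [MeasurableSpace Ω] (P : Measure Ω) [IsProbabilityMeasure P]
    (W : Type*) [NormedAddCommGroup W] [NormedSpace ℝ W] [CompleteSpace W]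
    [SecondCountableTopology W] [MeasurableSpace W] [BorelSpace W]
    -- W is of type 2:
    (htype2 : ∃ C > (0:ℝ), ∀ (n : ℕ) (X : Fin n → Ω → W),
      (∀ i, MemLp (X i) 2 P) → (∀ i, ∫ ω, X i ω ∂P = 0) →
      iIndepFun X P →
      ∫ ω, ‖∑ i, X i ω‖ ^ 2 ∂P ≤ C * ∑ i, ∫ ω, ‖X i ω‖ ^ 2 ∂P)
    (Y : ℕ → Ω → W) (hYmeas : ∀ k, Measurable (Y k))
    (hindep : iIndepFun Y P)
    (hident : ∀ k, IdentDistrib (Y k) (Y 1) P P)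
    (hL2 : ∀ k, MemLp (Y k) 2 P)
    (hcent : ∫ ω, Y 1 ω ∂P = 0)
    (S : ℕ → Ω → W) (hS : ∀ n ω, S n ω = ∑ k ∈ Finset.Icc 1 n, Y k ω) :
    ∀ ε > (0:ℝ), ∀ ε' > (0:ℝ), ∃ δ : ℝ, 0 < δ ∧ δ < 1 ∧ ∀ n : ℕ,
      P {ω | ∃ m : ℕ, ⌈(n : ℝ) * (1 - δ)⌉₊ ≤ m ∧ m ≤ ⌊(n : ℝ) * (1 + δ)⌋₊ ∧
          ε * Real.sqrt n < ‖S m ω - S n ω‖}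
        ≤ ENNReal.ofReal ε' := by
  classical
  obtain ⟨C, hCpos, hT2⟩ := htype2
  set σ2 : ℝ := ∫ ω, ‖Y 1 ω‖ ^ 2 ∂P with hσ2def
  have hσ2 : 0 ≤ σ2 := integral_nonneg fun ω => sq_nonneg _
  have hmomY : ∀ k, ∫ ω, ‖Y k ω‖ ^ 2 ∂P = σ2 := by
    intro k
    exact ((hident k).comp (measurable_norm.pow_const 2)).integral_eq
  have hcentY : ∀ k, ∫ ω, Y k ω ∂P = 0 := fun k => (hident k).integral_eq.trans hcent
  -- difference of partial sums
  have hSd : ∀ (ω : Ω) (u v : ℕ), u ≤ v → S v ω - S u ω = ∑ k ∈ Finset.Ioc u v, Y k ω := by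
    intro ω u v huv
    have h0 : ∀ w : ℕ, S w ω = ∑ k ∈ Finset.Ioc 0 w, Y k ω := by
      intro w
      have hIcc : Finset.Icc 1 w = Finset.Ioc 0 w := by
        ext k
        simp only [Finset.mem_Icc, Finset.mem_Ioc]
        omega
      rw [hS, hIcc]
    rw [h0, h0, ← Finset.sum_Ioc_consecutive (fun k => Y k ω) (Nat.zero_le u) huv]
    abel
  intro ε hε ε' hε'
  set δ : ℝ := min (1 / 2) (ε ^ 2 * ε' / (36 * C * (σ2 + 1))) with hδdef
  have hδpos : 0 < δ := lt_min (by norm_num) (by positivity)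
  have hδhalf : δ ≤ 1 / 2 := min_le_left _ _
  have hδsmall : δ ≤ ε ^ 2 * ε' / (36 * C * (σ2 + 1)) := min_le_right _ _
  refine ⟨δ, hδpos, lt_of_le_of_lt hδhalf (by norm_num), ?_⟩
  intro n
  rcases Nat.eq_zero_or_pos n with rfl | hn
  · have he : {ω : Ω | ∃ m : ℕ, ⌈((0:ℕ) : ℝ) * (1 - δ)⌉₊ ≤ m ∧ m ≤ ⌊((0:ℕ) : ℝ) * (1 + δ)⌋₊ ∧
        ε * Real.sqrt (0:ℕ) < ‖S m ω - S 0 ω‖} = ∅ := by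
      refine Set.eq_empty_iff_forall_notMem.mpr fun ω hω => ?_
      obtain ⟨m, _, h2, h3⟩ := hω
      have hm0 : m = 0 := by simpa using h2
      subst hm0
      simp at h3
    rw [he, measure_empty]
    exact zero_le
  -- n ≥ 1
  set a : ℕ := ⌈(n : ℝ) * (1 - δ)⌉₊ with hadef
  set b : ℕ := ⌊(n : ℝ) * (1 + δ)⌋₊ with hbdef
  set t : ℝ := ε * Real.sqrt n / 3 with htdef
  have hsqrt : 0 < Real.sqrt n := Real.sqrt_pos.mpr (by exact_mod_cast hn)
  have ht : 0 < t := by positivity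
  have h3t : 3 * t = ε * Real.sqrt n := by rw [htdef]; ring
  have ht2 : t ^ 2 = ε ^ 2 * n / 9 := by
    have hsq : Real.sqrt n ^ 2 = (n : ℝ) := Real.sq_sqrt (Nat.cast_nonneg n)
    rw [htdef]
    rw [div_pow, mul_pow, hsq]
    norm_num
  -- the two processes
  set g1 : ℕ → ℕ := fun j => n + 1 + j with hg1def
  set g2 : ℕ → ℕ := fun j => if j < n then n - j else n + 1 + j with hg2def
  have hg1inj : Function.Injective g1 := fun i j h => by simp only [hg1def] at h; omega
  have hg2inj : Function.Injective g2 := by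
    intro i j h
    simp only [hg2def] at h
    by_cases hi : i < n <;> by_cases hj : j < n <;> simp [hi, hj] at h <;> omega
  set Z1 : ℕ → Ω → W := fun j => Y (g1 j) with hZ1def
  set Z2 : ℕ → Ω → W := fun j => Y (g2 j) with hZ2def
  have hblock1 : ∀ c N : ℕ, ∫ ω, ‖∑ i ∈ Finset.Ico c (c + N), Z1 i ω‖ ^ 2 ∂P ≤ C * N * σ2 :=
    block_bound hCpos.le hσ2 hT2 Z1 (iIndepFun_precomp_of_injective hindep g1 hg1inj)
      (fun k => hL2 _) (fun k => hcentY _) (fun k => hmomY _)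
  have hblock2 : ∀ c N : ℕ, ∫ ω, ‖∑ i ∈ Finset.Ico c (c + N), Z2 i ω‖ ^ 2 ∂P ≤ C * N * σ2 :=
    block_bound hCpos.le hσ2 hT2 Z2 (iIndepFun_precomp_of_injective hindep g2 hg2inj)
      (fun k => hL2 _) (fun k => hcentY _) (fun k => hmomY _)
  have hbound1 := maximal_aux hCpos.le hσ2 Z1 (fun k => hYmeas _)
    (iIndepFun_precomp_of_injective hindep g1 hg1inj) (fun k => hL2 _) hblock1 ht (b - n)
  have hbound2 := maximal_aux hCpos.le hσ2 Z2 (fun k => hYmeas _)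
    (iIndepFun_precomp_of_injective hindep g2 hg2inj) (fun k => hL2 _) hblock2 ht (n - a)
  -- sums of Z over range j equal increments of S
  have hZ1sum : ∀ (ω : Ω) (j : ℕ), (∑ i ∈ Finset.range j, Z1 i ω) = S (n + j) ω - S n ω := by
    intro ω j
    rw [hSd ω n (n + j) (Nat.le_add_right n j)]
    have : Finset.Ioc n (n + j) = Finset.Ico (n + 1) (n + j + 1) := by
      ext k; simp [Finset.mem_Ioc, Finset.mem_Ico]
    rw [this, Finset.sum_Ico_eq_sum_range]
    have hj : n + j + 1 - (n + 1) = j := by omega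
    rw [hj]
  have hZ2sum : ∀ (ω : Ω) (j : ℕ), j ≤ n → (∑ i ∈ Finset.range j, Z2 i ω) = S n ω - S (n - j) ω := by
    intro ω j hj
    rw [hSd ω (n - j) n (Nat.sub_le n j)]
    have himg : Finset.Ioc (n - j) n = (Finset.range j).image (fun i => n - i) := by
      ext k
      simp only [Finset.mem_Ioc, Finset.mem_image, Finset.mem_range]
      constructor
      · rintro ⟨h1, h2⟩
        exact ⟨n - k, by omega, by omega⟩
      · rintro ⟨i, hi, rfl⟩
        omega
    rw [himg, Finset.sum_image (by
      intro x hx y hy hxy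
      simp only [Finset.coe_range, Set.mem_Iio, Finset.mem_range] at hx hy hxy
      omega)]
    refine Finset.sum_congr rfl fun i hi => ?_
    simp only [Finset.mem_range] at hi
    have hin : i < n := by omega
    simp [hZ2def, hg2def, hin]
  -- event inclusion
  have hsub : {ω : Ω | ∃ m : ℕ, a ≤ m ∧ m ≤ b ∧ ε * Real.sqrt n < ‖S m ω - S n ω‖}
      ⊆ {ω | ∃ j, j ≤ n - a ∧ 3 * t < ‖∑ i ∈ Finset.range j, Z2 i ω‖}
        ∪ {ω | ∃ j, j ≤ b - n ∧ 3 * t < ‖∑ i ∈ Finset.range j, Z1 i ω‖} := by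
    rintro ω ⟨m, hma, hmb, hm⟩
    rw [← h3t] at hm
    by_cases hmn : m ≤ n
    · left
      refine ⟨n - m, Nat.sub_le_sub_left hma n, ?_⟩
      rw [hZ2sum ω (n - m) (Nat.sub_le n m)]
      have hnm : n - (n - m) = m := by omega
      rw [hnm, norm_sub_rev]
      exact hm
    · right
      push_neg at hmn
      refine ⟨m - n, Nat.sub_le_sub_right hmb n, ?_⟩
      rw [hZ1sum ω (m - n)]
      have : n + (m - n) = m := by omega
      rw [this]
      exact hm
  -- numeric bounds on N's
  have hNa : ((n - a : ℕ) : ℝ) ≤ δ * n := by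
    by_cases han : a ≤ n
    · have h1 : (n : ℝ) * (1 - δ) ≤ a := Nat.le_ceil _
      rw [Nat.cast_sub han]
      nlinarith
    · push_neg at han
      rw [Nat.sub_eq_zero_of_le han.le]
      have : (0:ℝ) ≤ δ * n := by positivity
      simpa using this
  have hNb : ((b - n : ℕ) : ℝ) ≤ δ * n := by
    have hble : (b : ℝ) ≤ (n : ℝ) * (1 + δ) := Nat.floor_le (by positivity)
    by_cases hnb : n ≤ b
    · rw [Nat.cast_sub hnb]
      nlinarith
    · push_neg at hnb
      rw [Nat.sub_eq_zero_of_le hnb.le]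
      have : (0:ℝ) ≤ δ * n := by positivity
      simpa using this
  -- each side bounded by ε'/2
  have hkey : ∀ N : ℕ, ((N : ℝ)) ≤ δ * n → 2 * C * N * σ2 / t ^ 2 ≤ ε' / 2 := by
    intro N hN
    rw [ht2]
    rw [div_le_iff₀ (by positivity)]
    have h1 : (N : ℝ) ≤ (ε ^ 2 * ε' / (36 * C * (σ2 + 1))) * n := by
      refine hN.trans ?_
      exact mul_le_mul_of_nonneg_right hδsmall (Nat.cast_nonneg n)
    have h2 : 2 * C * (N:ℝ) * σ2 ≤ 2 * C * ((ε ^ 2 * ε' / (36 * C * (σ2 + 1))) * n) * σ2 := by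
      have := mul_le_mul_of_nonneg_left h1 (by positivity : (0:ℝ) ≤ 2 * C)
      exact mul_le_mul_of_nonneg_right this hσ2
    refine h2.trans ?_
    have heq : 2 * C * ((ε ^ 2 * ε' / (36 * C * (σ2 + 1))) * n) * σ2
        = (2 * C * σ2 * (ε ^ 2 * ε') * n) / (36 * C * (σ2 + 1)) := by ring
    rw [heq, div_le_iff₀ (by positivity)]
    have hpos : (0:ℝ) ≤ 2 * C * (ε ^ 2 * ε') * n := by positivity
    have hexp : ε' / 2 * (ε ^ 2 * ↑n / 9) * (36 * C * (σ2 + 1))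
        = 2 * C * σ2 * (ε ^ 2 * ε') * ↑n + 2 * C * (ε ^ 2 * ε') * ↑n := by ring
    rw [hexp]
    linarith
  have hb1 : P {ω : Ω | ∃ j, j ≤ b - n ∧ 3 * t < ‖∑ i ∈ Finset.range j, Z1 i ω‖}
      ≤ ENNReal.ofReal (ε' / 2) :=
    hbound1.trans (ENNReal.ofReal_le_ofReal (hkey _ hNb))
  have hb2 : P {ω : Ω | ∃ j, j ≤ n - a ∧ 3 * t < ‖∑ i ∈ Finset.range j, Z2 i ω‖}
      ≤ ENNReal.ofReal (ε' / 2) :=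
    hbound2.trans (ENNReal.ofReal_le_ofReal (hkey _ hNa))
  calc P {ω : Ω | ∃ m : ℕ, a ≤ m ∧ m ≤ b ∧ ε * Real.sqrt n < ‖S m ω - S n ω‖}
      ≤ P ({ω : Ω | ∃ j, j ≤ n - a ∧ 3 * t < ‖∑ i ∈ Finset.range j, Z2 i ω‖}
          ∪ {ω | ∃ j, j ≤ b - n ∧ 3 * t < ‖∑ i ∈ Finset.range j, Z1 i ω‖}) := measure_mono hsub
    _ ≤ P {ω : Ω | ∃ j, j ≤ n - a ∧ 3 * t < ‖∑ i ∈ Finset.range j, Z2 i ω‖}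
        + P {ω : Ω | ∃ j, j ≤ b - n ∧ 3 * t < ‖∑ i ∈ Finset.range j, Z1 i ω‖} := measure_union_le _ _
    _ ≤ ENNReal.ofReal (ε' / 2) + ENNReal.ofReal (ε' / 2) := add_le_add hb2 hb1
    _ = ENNReal.ofReal ε' := by
        rw [← ENNReal.ofReal_add (by positivity) (by positivity)]
        norm_num
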